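/- Let p > q > 0 be coprime integers with q odd, and for i ∈ {1,…,q} define k_i = 1 + ⌊(p/q)(i−1) + (q−1)/(2q)⌋. Then for every i ∈ {2,…,q} one has k_i + k_{q+2−i} = p + 2. -/

import Mathlib

lemma floor_int_div_real (a b : ℤ) (hb : 0 < b) : ⌊(a : ℝ) / (b : ℝ)⌋ = a / b := by
  lift b to ℕ using hb.le
  exact_mod_cast Rat.floor_intCast_div_natCast a b

/-- for coprime `p > q > 0` with `q` odd and
`k_i = 1 + ⌊(p/q)(i−1) + (q−1)/(2q)⌋`, one has `k_i + k_{q+2−i} = p + 2`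
for every `i ∈ {2,…,q}`. -/
theorem stmt_7 (p q : ℤ) (h0q : 0 < q) (hqp : q < p) (hpq : IsCoprime p q)
    (hqodd : Odd q)
    (kk : ℤ → ℤ)
    (hk : ∀ i : ℤ, kk i =
      1 + ⌊(p : ℝ) / (q : ℝ) * ((i : ℝ) - 1) + ((q : ℝ) - 1) / (2 * (q : ℝ))⌋)
    (i : ℤ) (hi2 : 2 ≤ i) (hiq : i ≤ q) :
    kk i + kk (q + 2 - i) = p + 2 := by
  have hq0 : (q : ℝ) ≠ 0 := by exact_mod_cast h0q.ne'
  set a : ℤ := 2 * p * (i - 1) + (q - 1) with ha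
  set b : ℤ := 2 * p * (q + 1 - i) + (q - 1) with hb
  set d : ℤ := 2 * q with hd
  have hdpos : 0 < d := by omega
  have e1 : (p : ℝ) / (q : ℝ) * ((i : ℝ) - 1) + ((q : ℝ) - 1) / (2 * (q : ℝ))
      = ((a : ℤ) : ℝ) / ((d : ℤ) : ℝ) := by
    push_cast [ha, hd]; field_simp
  have e2 : (p : ℝ) / (q : ℝ) * (((q + 2 - i : ℤ) : ℝ) - 1) + ((q : ℝ) - 1) / (2 * (q : ℝ))
      = ((b : ℤ) : ℝ) / ((d : ℤ) : ℝ) := by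
    push_cast [hb, hd]; field_simp; ring
  rw [hk, hk, e1, e2, floor_int_div_real _ _ hdpos, floor_int_div_real _ _ hdpos]
  -- now an integer-division identity
  set e : ℤ := a % d with he
  set f : ℤ := b % d with hf
  have hae : d * (a / d) + e = a := Int.mul_ediv_add_emod a d
  have hbf : d * (b / d) + f = b := Int.mul_ediv_add_emod b d
  have he0 : 0 ≤ e := Int.emod_nonneg a hdpos.ne'
  have hf0 : 0 ≤ f := Int.emod_nonneg b hdpos.ne'
  have hed : e < d := Int.emod_lt_of_pos a hdpos
  have hfd : f < d := Int.emod_lt_of_pos b hdpos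
  have h2d : (2 : ℤ) ∣ d := ⟨q, hd⟩
  have hae2 : e % 2 = 0 := by
    have h1 := Int.emod_emod_of_dvd a h2d
    rw [← he] at h1
    have h2 : a % 2 = 0 := by
      have : a = 2 * (p * (i - 1)) + (q - 1) := by rw [ha]; ring
      obtain ⟨r, hr⟩ := hqodd
      omega
    omega
  have hbf2 : f % 2 = 0 := by
    have h1 := Int.emod_emod_of_dvd b h2d
    rw [← hf] at h1
    have h2 : b % 2 = 0 := by
      have : b = 2 * (p * (q + 1 - i)) + (q - 1) := by rw [hb]; ring
      obtain ⟨r, hr⟩ := hqodd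
      omega
    omega
  -- e, f are even and < d, with d even, so e, f ≤ d - 2
  have heD : e ≤ d - 2 := by omega
  have hfD : f ≤ d - 2 := by omega
  have hab : a + b = d * (p + 1) - 2 := by rw [ha, hb, hd]; ring
  have hdvd : d ∣ e + f + 2 := by
    have heq : e + f + 2 = d * (p + 1) - d * (a / d) - d * (b / d) := by linarith
    rw [heq]
    exact Dvd.dvd.sub (Dvd.dvd.sub (Dvd.intro _ rfl) (Dvd.intro _ rfl)) (Dvd.intro _ rfl)
  obtain ⟨c, hc⟩ := hdvd
  have hcpos : 0 < c := by
    by_contra h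
    push_neg at h
    have := mul_nonpos_of_nonneg_of_nonpos hdpos.le h
    omega
  have hc2 : c < 2 := by
    have hlt : d * c < d * 2 := by omega
    exact lt_of_mul_lt_mul_left hlt hdpos.le
  have hc1 : c = 1 := by omega
  have hef : e + f = d - 2 := by
    rw [hc1, mul_one] at hc; omega
  have hcancel : d * (a / d + b / d) = d * p := by
    have h1 : d * (a / d + b / d) = d * (a / d) + d * (b / d) := by ring
    have h2 : d * (p + 1) = d * p + d := by ring
    linarith
  have hdiv : a / d + b / d = p := mul_left_cancel₀ hdpos.ne' hcancel
  linarith
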